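/- Under the setting of the one-step descent inequality: let F = f + g with ∇f L_f-Lipschitz on convex X, define the Lyapunov function F̃(x^k, ..., x^{k-δ}) = F(x^k) + (δ L_f / 2) Σ_{l=k-δ}^{k-1} (l - (k-1) + δ)||x^{l+1} - x^l||_2^2 (with x^l = x^0 for l < 0). Suppose x^{k+1} = x^k + γ(x̂^k - x^k) differs from x^k only in one block, where x̂^k satisfies the best-response optimality with constant c relative to the delayed point x̃^k, and the delay in the updated block is zero and all delays are at most δ. Then F̃(x^{k+1}, ..., x^{k+1-δ}) ≤ F̃(x^k, ..., x^{k-δ}) - γ(c - γ(L_f + δ^2 L_f / 2))||x̂^k - x^k||_2^2. -/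

import Mathlib

open RealInnerProductSpace

lemma inner_gradient_eq' {E : Type*} [NormedAddCommGroup E] [InnerProductSpace ℝ E]
    [CompleteSpace E] (f : E → ℝ) (x v : E) :
    ⟪gradient f x, v⟫ = fderiv ℝ f x v := by
  simp [gradient, InnerProductSpace.toDual_symm_apply]

lemma descent_lemma' {E : Type*} [NormedAddCommGroup E] [InnerProductSpace ℝ E]
    [CompleteSpace E] {f : E → ℝ} {L : ℝ} {s : Set E} (hs : Convex ℝ s)
    (hf : ContDiff ℝ 1 f) (hlip : LipschitzOnWith (Real.toNNReal L) (gradient f) s)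
    (hL : 0 ≤ L) {a b : E} (ha : a ∈ s) (hb : b ∈ s) :
    f b ≤ f a + ⟪gradient f a, b - a⟫ + L / 2 * ‖b - a‖ ^ 2 := by
  set v := b - a with hv
  -- χ t = f (a + t • v) - t * ⟪∇f a, v⟫ - t^2 * L * ‖v‖^2 / 2
  set χ : ℝ → ℝ := fun t => f (a + t • v) - t * ⟪gradient f a, v⟫ - t ^ 2 * L * ‖v‖ ^ 2 / 2
    with hχ
  have hdiff := hf.differentiable one_ne_zero
  have hmem : ∀ t : ℝ, t ∈ Set.Icc (0:ℝ) 1 → a + t • v ∈ s := fun t ht =>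
    hs.add_smul_sub_mem ha hb ht
  have hder : ∀ t : ℝ, HasDerivAt χ
      (⟪gradient f (a + t • v), v⟫ - ⟪gradient f a, v⟫ - t * L * ‖v‖ ^ 2) t := by
    intro t
    have h1 : HasDerivAt (fun t : ℝ => a + t • v) v t := by
      simpa using ((hasDerivAt_id t).smul_const v).const_add a
    have h2 : HasDerivAt (fun t : ℝ => f (a + t • v)) (fderiv ℝ f (a + t • v) v) t :=
      (hdiff (a + t • v)).hasFDerivAt.comp_hasDerivAt t h1
    have h3 : HasDerivAt (fun t : ℝ => t * ⟪gradient f a, v⟫) ⟪gradient f a, v⟫ t := by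
      simpa using (hasDerivAt_id t).mul_const (⟪gradient f a, v⟫)
    have h4 : HasDerivAt (fun t : ℝ => t ^ 2 * L * ‖v‖ ^ 2 / 2) (t * L * ‖v‖ ^ 2) t := by
      have := ((hasDerivAt_pow 2 t).mul_const L).mul_const (‖v‖ ^ 2)
      have h5 := this.div_const 2
      exact h5.congr_deriv (by ring)
    have := (h2.sub h3).sub h4
    rw [inner_gradient_eq']
    exact this
  have hcont : ContinuousOn χ (Set.Icc 0 1) := by
    apply Continuous.continuousOn
    have : Continuous fun t : ℝ => a + t • v := by continuity
    exact ((hf.continuous.comp this).sub (continuous_id.mul continuous_const)).sub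
      (by continuity)
  have hanti : AntitoneOn χ (Set.Icc 0 1) := by
    apply antitoneOn_of_deriv_nonpos (convex_Icc 0 1) hcont
    · intro t ht
      exact (hder t).differentiableAt.differentiableWithinAt
    · intro t ht
      rw [interior_Icc] at ht
      rw [(hder t).deriv]
      have hbd : ⟪gradient f (a + t • v) - gradient f a, v⟫ ≤ t * L * ‖v‖ ^ 2 := by
        calc ⟪gradient f (a + t • v) - gradient f a, v⟫
            ≤ ‖gradient f (a + t • v) - gradient f a‖ * ‖v‖ := real_inner_le_norm _ _
          _ ≤ (L * (t * ‖v‖)) * ‖v‖ := by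
              apply mul_le_mul_of_nonneg_right _ (norm_nonneg v)
              have := hlip.dist_le_mul _ (hmem t ⟨le_of_lt ht.1, le_of_lt ht.2⟩) _
                (hmem 0 ⟨le_refl _, zero_le_one⟩)
              rw [dist_eq_norm, dist_eq_norm] at this
              have h0 : a + (0:ℝ) • v = a := by simp
              rw [h0] at this
              have hsm : a + t • v - a = t • v := by abel
              rw [hsm, norm_smul] at this
              calc ‖gradient f (a + t • v) - gradient f a‖ ≤ L.toNNReal * (‖t‖ * ‖v‖) := this
                _ = L * (t * ‖v‖) := by
                    rw [Real.coe_toNNReal L hL, Real.norm_eq_abs, abs_of_pos ht.1]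
          _ = t * L * ‖v‖ ^ 2 := by ring
      rw [inner_sub_left] at hbd
      linarith
  have h01 : χ 1 ≤ χ 0 := hanti (by norm_num) (by norm_num) zero_le_one
  simp only [hχ, one_smul, zero_smul, add_zero, one_pow, one_mul, zero_pow, zero_mul,
    add_sub_cancel, sub_zero, mul_zero] at h01
  have : a + v = b := by rw [hv]; abel
  rw [this] at h01
  linarith

lemma zsum_succ_top {a b : ℤ} (h : a ≤ b) (f : ℤ → ℝ) :
    ∑ l ∈ Finset.Ico a (b + 1), f l = (∑ l ∈ Finset.Ico a b, f l) + f b := by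
  have : Finset.Ico a (b + 1) = insert b (Finset.Ico a b) := by
    ext l; simp only [Finset.mem_Ico, Finset.mem_insert]; omega
  rw [this, Finset.sum_insert (by simp), add_comm]

lemma zsum_succ_bot {a b : ℤ} (h : a < b) (f : ℤ → ℝ) :
    ∑ l ∈ Finset.Ico a b, f l = f a + ∑ l ∈ Finset.Ico (a + 1) b, f l := by
  have : Finset.Ico a b = insert a (Finset.Ico (a + 1) b) := by
    ext l; simp only [Finset.mem_Ico, Finset.mem_insert]; omega
  rw [this, Finset.sum_insert (by simp)]

set_option maxHeartbeats 2000000 in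
/-- The Lyapunov descent inequality (17): with
`F̃(x^k,…,x^{k-δ}) = F(x^k) + (δ L_f / 2) Σ_{l=k-δ}^{k-1} (l-(k-1)+δ)‖x^{l+1}-x^l‖²`
(where `x^l = x^0` for `l < 0`), a block update `x^{k+1} = x^k + γ(x̂ - x^k)` based on a
best response at a delayed point `x̃` (zero delay in the updated block, all delays `≤ δ`)
satisfies `F̃(k+1) ≤ F̃(k) - γ(c - γ(L_f + δ² L_f / 2))‖x̂ - x^k‖²`. -/
theorem lyapunov_descent {N : ℕ} {n : Fin N → ℕ}
    (Xi : ∀ i : Fin N, Set (EuclideanSpace ℝ (Fin (n i))))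
    (hXine : ∀ i, (Xi i).Nonempty) (hXicl : ∀ i, IsClosed (Xi i))
    (hXicv : ∀ i, Convex ℝ (Xi i))
    (f : (PiLp 2 fun i : Fin N => EuclideanSpace ℝ (Fin (n i))) → ℝ)
    (g : ∀ i : Fin N, EuclideanSpace ℝ (Fin (n i)) → ℝ)
    (L_f c γ : ℝ) (δ : ℕ) (hδ : 1 ≤ δ)
    (hLf : 0 ≤ L_f) (hc : 0 < c) (hγ0 : 0 < γ) (hγ1 : γ ≤ 1)
    (hf : ContDiff ℝ 1 f)
    (hlip : LipschitzOnWith (Real.toNNReal L_f) (gradient f)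
      {z : PiLp 2 fun i : Fin N => EuclideanSpace ℝ (Fin (n i)) | ∀ i, z i ∈ Xi i})
    (hg : ∀ i, ConvexOn ℝ Set.univ (g i))
    (x : ℕ → PiLp 2 fun i : Fin N => EuclideanSpace ℝ (Fin (n i)))
    (hxX : ∀ k i, x k i ∈ Xi i)
    (k : ℕ) (i0 : Fin N)
    (xhat : PiLp 2 fun i : Fin N => EuclideanSpace ℝ (Fin (n i)))
    (hxhatX : ∀ i, xhat i ∈ Xi i)
    (hxhatsame : ∀ j, j ≠ i0 → xhat j = x k j)
    (d : Fin N → ℕ) (hd : ∀ j, d j ≤ δ) (hd0 : d i0 = 0)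
    (xt : PiLp 2 fun i : Fin N => EuclideanSpace ℝ (Fin (n i)))
    (hxt : ∀ j, xt j = x (k - d j) j)
    (hstep : x (k + 1) = x k + γ • (xhat - x k)) :
    ⟪gradient f xt i0, xhat i0 - xt i0⟫ + g i0 (xhat i0) - g i0 (xt i0)
        ≤ -c * ‖xhat i0 - xt i0‖^2 →
    (f (x (k + 1)) + ∑ i, g i (x (k + 1) i))
      + ((δ : ℝ) * L_f / 2) * ∑ l ∈ Finset.Ico ((k : ℤ) + 1 - δ) ((k : ℤ) + 1),
          ((l - (k : ℤ) + δ : ℤ) : ℝ) * ‖x ((l + 1).toNat) - x (l.toNat)‖^2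
      ≤ (f (x k) + ∑ i, g i (x k i))
          + ((δ : ℝ) * L_f / 2) * ∑ l ∈ Finset.Ico ((k : ℤ) - δ) (k : ℤ),
              ((l - ((k : ℤ) - 1) + δ : ℤ) : ℝ) * ‖x ((l + 1).toNat) - x (l.toNat)‖^2
        - γ * (c - γ * (L_f + (δ : ℝ)^2 * L_f / 2)) * ‖xhat - x k‖^2 := by
  intro hopt
  -- basic set facts
  have hXcv : Convex ℝ {z : PiLp 2 fun i : Fin N => EuclideanSpace ℝ (Fin (n i)) |
      ∀ i, z i ∈ Xi i} := by
    intro u hu v hv a b ha hb hab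
    intro i
    have := hXicv i (hu i) (hv i) ha hb hab
    simpa [PiLp.add_apply, PiLp.smul_apply] using this
  have hxkX : ∀ m : ℕ, x m ∈ {z : PiLp 2 fun i : Fin N => EuclideanSpace ℝ (Fin (n i)) |
      ∀ i, z i ∈ Xi i} := fun m i => hxX m i
  have hxtX : xt ∈ {z : PiLp 2 fun i : Fin N => EuclideanSpace ℝ (Fin (n i)) |
      ∀ i, z i ∈ Xi i} := by intro i; rw [hxt]; exact hxX _ i
  -- block facts
  have hxti0 : xt i0 = x k i0 := by rw [hxt]; simp [hd0]
  have hblk0 : ∀ j, j ≠ i0 → (xhat - x k) j = 0 := by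
    intro j hj; simp [PiLp.sub_apply, hxhatsame j hj]
  have hri0 : ‖xhat - x k‖ ^ 2 = ‖xhat i0 - x k i0‖ ^ 2 := by
    rw [PiLp.norm_sq_eq_of_L2 _ (xhat - x k), Finset.sum_eq_single i0]
    · simp [PiLp.sub_apply]
    · intro j _ hj; rw [hblk0 j hj]; simp
    · simp
  have hΔ : x (k + 1) - x k = γ • (xhat - x k) := by rw [hstep]; abel
  have hx1j : ∀ j, j ≠ i0 → x (k + 1) j = x k j := by
    intro j hj
    have h1 : (x (k + 1) - x k) j = 0 := by rw [hΔ]; simp [PiLp.smul_apply, hblk0 j hj]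
    have h2 : x (k + 1) j - x k j = 0 := by simpa [PiLp.sub_apply] using h1
    exact sub_eq_zero.mp h2
  -- inner product reduces to block i0
  have hinner1 : ⟪gradient f xt, xhat - x k⟫ = ⟪gradient f xt i0, xhat i0 - x k i0⟫ := by
    rw [PiLp.inner_apply, Finset.sum_eq_single i0]
    · simp [PiLp.sub_apply]
    · intro j _ hj
      rw [show (xhat - x k) j = 0 from hblk0 j hj, inner_zero_right]
    · simp
  have hnd : ‖x (k + 1) - x k‖ ^ 2 = γ ^ 2 * ‖xhat - x k‖ ^ 2 := by
    rw [hΔ, norm_smul, mul_pow, Real.norm_eq_abs, sq_abs]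
  have hdes := descent_lemma' hXcv hf hlip hLf (hxkX k) (hxkX (k + 1))
  have hgraddiff : ‖gradient f (x k) - gradient f xt‖ ≤ L_f * ‖x k - xt‖ := by
    have h1 := hlip.dist_le_mul _ (hxkX k) _ hxtX
    rw [dist_eq_norm, dist_eq_norm] at h1
    calc ‖gradient f (x k) - gradient f xt‖ ≤ L_f.toNNReal * ‖x k - xt‖ := h1
      _ = L_f * ‖x k - xt‖ := by rw [Real.coe_toNNReal _ hLf]
  have hsplit : ⟪gradient f (x k), x (k + 1) - x k⟫
      ≤ γ * ⟪gradient f xt i0, xhat i0 - x k i0⟫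
        + γ * (L_f * ‖x k - xt‖ * ‖xhat - x k‖) := by
    rw [hΔ, real_inner_smul_right]
    have h1 : ⟪gradient f (x k), xhat - x k⟫ = ⟪gradient f xt, xhat - x k⟫
        + ⟪gradient f (x k) - gradient f xt, xhat - x k⟫ := by
      rw [inner_sub_left]; ring
    have h2 : ⟪gradient f (x k) - gradient f xt, xhat - x k⟫
        ≤ L_f * ‖x k - xt‖ * ‖xhat - x k‖ :=
      le_trans (real_inner_le_norm _ _) (mul_le_mul_of_nonneg_right hgraddiff (norm_nonneg _))
    rw [h1, hinner1, mul_add]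
    have := mul_le_mul_of_nonneg_left h2 hγ0.le
    linarith
  have hfb : f (x (k + 1)) ≤ f (x k) + γ * ⟪gradient f xt i0, xhat i0 - x k i0⟫
      + γ * (L_f * ‖x k - xt‖ * ‖xhat - x k‖) + L_f / 2 * (γ ^ 2 * ‖xhat - x k‖ ^ 2) := by
    rw [hnd] at hdes
    linarith
  -- g part
  have hgsplit : ∑ i, g i (x (k + 1) i) ≤ ∑ i, g i (x k i)
      + γ * (g i0 (xhat i0) - g i0 (x k i0)) := by
    have hxk1i0 : x (k + 1) i0 = (1 - γ) • x k i0 + γ • xhat i0 := by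
      have h3 : x (k + 1) i0 = x k i0 + γ • (xhat i0 - x k i0) := by
        rw [hstep]; simp [PiLp.add_apply, PiLp.smul_apply, PiLp.sub_apply]
      rw [h3, smul_sub, sub_smul, one_smul]; abel
    have hcv := (hg i0).2 (Set.mem_univ (x k i0)) (Set.mem_univ (xhat i0))
      (by linarith : (0:ℝ) ≤ 1 - γ) hγ0.le (by ring)
    rw [← hxk1i0] at hcv
    have hsum : ∑ i, g i (x (k + 1) i) - ∑ i, g i (x k i)
        = g i0 (x (k + 1) i0) - g i0 (x k i0) := by
      rw [← Finset.sum_sub_distrib, Finset.sum_eq_single i0]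
      · intro j _ hj; rw [hx1j j hj]; ring
      · simp
    simp only [smul_eq_mul] at hcv
    nlinarith [hcv, hsum]
  have hopt' : ⟪gradient f xt i0, xhat i0 - x k i0⟫ + g i0 (xhat i0) - g i0 (x k i0)
      ≤ -c * ‖xhat - x k‖ ^ 2 := by
    rw [hxti0] at hopt
    rw [hri0]
    exact hopt
  -- delayed difference bound
  have hblk : ∀ j : Fin N, ‖x k j - xt j‖ ^ 2
      ≤ (δ : ℝ) * ∑ l ∈ Finset.Ico ((k : ℤ) - δ) (k : ℤ),
          ‖x ((l + 1).toNat) j - x (l.toNat) j‖ ^ 2 := by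
    intro j
    rw [hxt j]
    have tele : x k j - x (k - d j) j
        = ∑ m ∈ Finset.Ico (k - d j) k, (x (m + 1) j - x m j) := by
      rw [Finset.sum_Ico_eq_sub _ (Nat.sub_le k (d j)),
        Finset.sum_range_sub (fun m => x m j), Finset.sum_range_sub (fun m => x m j)]
      abel
    rw [tele]
    have h1 : ‖∑ m ∈ Finset.Ico (k - d j) k, (x (m + 1) j - x m j)‖
        ≤ ∑ m ∈ Finset.Ico (k - d j) k, ‖x (m + 1) j - x m j‖ := norm_sum_le _ _
    have h2 : (∑ m ∈ Finset.Ico (k - d j) k, ‖x (m + 1) j - x m j‖) ^ 2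
        ≤ ((Finset.Ico (k - d j) k).card : ℝ)
          * ∑ m ∈ Finset.Ico (k - d j) k, ‖x (m + 1) j - x m j‖ ^ 2 := by
      exact sq_sum_le_card_mul_sum_sq
    have hcard : ((Finset.Ico (k - d j) k).card : ℝ) ≤ (δ : ℝ) := by
      rw [Nat.card_Ico]
      exact_mod_cast le_trans (by omega : k - (k - d j) ≤ d j) (hd j)
    have h3 : ∑ m ∈ Finset.Ico (k - d j) k, ‖x (m + 1) j - x m j‖ ^ 2
        ≤ ∑ l ∈ Finset.Ico ((k : ℤ) - δ) (k : ℤ),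
            ‖x ((l + 1).toNat) j - x (l.toNat) j‖ ^ 2 := by
      have himg : ∑ m ∈ Finset.Ico (k - d j) k, ‖x (m + 1) j - x m j‖ ^ 2
          = ∑ l ∈ (Finset.Ico (k - d j) k).image (fun m : ℕ => (m : ℤ)),
              ‖x ((l + 1).toNat) j - x (l.toNat) j‖ ^ 2 := by
        rw [Finset.sum_image (fun a _ b _ hab => by exact_mod_cast hab)]
        apply Finset.sum_congr rfl
        intro m _
        have e1 : ((m : ℤ) + 1).toNat = m + 1 := by omega
        have e2 : ((m : ℤ)).toNat = m := by omega
        rw [e1, e2]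
      rw [himg]
      apply Finset.sum_le_sum_of_subset_of_nonneg
      · intro l hl
        simp only [Finset.mem_image, Finset.mem_Ico] at hl ⊢
        obtain ⟨m, hm, rfl⟩ := hl
        have := hd j
        omega
      · intro _ _ _; positivity
    have hsumnn : (0:ℝ) ≤ ∑ m ∈ Finset.Ico (k - d j) k, ‖x (m + 1) j - x m j‖ :=
      Finset.sum_nonneg fun _ _ => norm_nonneg _
    have hsq : ‖∑ m ∈ Finset.Ico (k - d j) k, (x (m + 1) j - x m j)‖ ^ 2
        ≤ (∑ m ∈ Finset.Ico (k - d j) k, ‖x (m + 1) j - x m j‖) ^ 2 := by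
      apply pow_le_pow_left₀ (norm_nonneg _) h1
    have hsnn : (0:ℝ) ≤ ∑ m ∈ Finset.Ico (k - d j) k, ‖x (m + 1) j - x m j‖ ^ 2 :=
      Finset.sum_nonneg fun _ _ => sq_nonneg _
    calc ‖∑ m ∈ Finset.Ico (k - d j) k, (x (m + 1) j - x m j)‖ ^ 2
        ≤ ((Finset.Ico (k - d j) k).card : ℝ)
          * ∑ m ∈ Finset.Ico (k - d j) k, ‖x (m + 1) j - x m j‖ ^ 2 := le_trans hsq h2
      _ ≤ (δ : ℝ) * ∑ m ∈ Finset.Ico (k - d j) k, ‖x (m + 1) j - x m j‖ ^ 2 :=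
          mul_le_mul_of_nonneg_right hcard hsnn
      _ ≤ (δ : ℝ) * ∑ l ∈ Finset.Ico ((k : ℤ) - δ) (k : ℤ),
            ‖x ((l + 1).toNat) j - x (l.toNat) j‖ ^ 2 :=
          mul_le_mul_of_nonneg_left h3 (by positivity)
  have hdel : ‖x k - xt‖ ^ 2 ≤ (δ : ℝ) * ∑ l ∈ Finset.Ico ((k : ℤ) - δ) (k : ℤ),
      ‖x ((l + 1).toNat) - x (l.toNat)‖ ^ 2 := by
    rw [PiLp.norm_sq_eq_of_L2 _ (x k - xt)]
    calc ∑ j, ‖(x k - xt) j‖ ^ 2 = ∑ j, ‖x k j - xt j‖ ^ 2 := by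
          simp [PiLp.sub_apply]
      _ ≤ ∑ j, (δ : ℝ) * ∑ l ∈ Finset.Ico ((k : ℤ) - δ) (k : ℤ),
            ‖x ((l + 1).toNat) j - x (l.toNat) j‖ ^ 2 :=
          Finset.sum_le_sum fun j _ => hblk j
      _ = (δ : ℝ) * ∑ l ∈ Finset.Ico ((k : ℤ) - δ) (k : ℤ),
            ∑ j, ‖x ((l + 1).toNat) j - x (l.toNat) j‖ ^ 2 := by
          rw [← Finset.mul_sum, Finset.sum_comm]
      _ = (δ : ℝ) * ∑ l ∈ Finset.Ico ((k : ℤ) - δ) (k : ℤ),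
            ‖x ((l + 1).toNat) - x (l.toNat)‖ ^ 2 := by
          congr 1
          apply Finset.sum_congr rfl
          intro l _
          rw [PiLp.norm_sq_eq_of_L2 _ (x ((l + 1).toNat) - x (l.toNat))]
          simp [PiLp.sub_apply]
  -- Lyapunov sum identity
  have hkey : ∑ l ∈ Finset.Ico ((k : ℤ) + 1 - δ) ((k : ℤ) + 1),
        ((l - (k : ℤ) + δ : ℤ) : ℝ) * ‖x ((l + 1).toNat) - x (l.toNat)‖ ^ 2
      = (∑ l ∈ Finset.Ico ((k : ℤ) - δ) (k : ℤ),
          ((l - ((k : ℤ) - 1) + δ : ℤ) : ℝ) * ‖x ((l + 1).toNat) - x (l.toNat)‖ ^ 2)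
        - (∑ l ∈ Finset.Ico ((k : ℤ) - δ) (k : ℤ), ‖x ((l + 1).toNat) - x (l.toNat)‖ ^ 2)
        + (δ : ℝ) * (γ ^ 2 * ‖xhat - x k‖ ^ 2) := by
    have e1 : (((k : ℤ) + 1).toNat) = k + 1 := by omega
    have e2 : ((k : ℤ).toNat) = k := by omega
    have hwk : ‖x (((k : ℤ) + 1).toNat) - x ((k : ℤ).toNat)‖ ^ 2
        = γ ^ 2 * ‖xhat - x k‖ ^ 2 := by rw [e1, e2]; exact hnd
    rw [zsum_succ_top (by omega : (k : ℤ) + 1 - δ ≤ (k : ℤ))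
      (fun l => ((l - (k : ℤ) + δ : ℤ) : ℝ) * ‖x ((l + 1).toNat) - x (l.toNat)‖ ^ 2)]
    rw [zsum_succ_bot (by omega : (k : ℤ) - δ < (k : ℤ))
      (fun l => ((l - ((k : ℤ) - 1) + δ : ℤ) : ℝ) * ‖x ((l + 1).toNat) - x (l.toNat)‖ ^ 2)]
    rw [zsum_succ_bot (by omega : (k : ℤ) - δ < (k : ℤ))
      (fun l => ‖x ((l + 1).toNat) - x (l.toNat)‖ ^ 2)]
    have hset : Finset.Ico ((k : ℤ) + 1 - δ) (k : ℤ)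
        = Finset.Ico ((k : ℤ) - δ + 1) (k : ℤ) := by
      congr 1; omega
    rw [hset]
    have hmain : ∑ l ∈ Finset.Ico ((k : ℤ) - δ + 1) (k : ℤ),
          ((l - (k : ℤ) + δ : ℤ) : ℝ) * ‖x ((l + 1).toNat) - x (l.toNat)‖ ^ 2
        = ∑ l ∈ Finset.Ico ((k : ℤ) - δ + 1) (k : ℤ),
            (((l - ((k : ℤ) - 1) + δ : ℤ) : ℝ) * ‖x ((l + 1).toNat) - x (l.toNat)‖ ^ 2
              - ‖x ((l + 1).toNat) - x (l.toNat)‖ ^ 2) := by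
      apply Finset.sum_congr rfl
      intro l _
      have hco : ((l - (k : ℤ) + δ : ℤ) : ℝ) = ((l - ((k : ℤ) - 1) + δ : ℤ) : ℝ) - 1 := by
        push_cast; ring
      rw [hco]; ring
    rw [hmain, Finset.sum_sub_distrib]
    have hbot : ((((k : ℤ) - δ) - ((k : ℤ) - 1) + δ : ℤ) : ℝ) = 1 := by push_cast; ring
    have hcoefk : (((k : ℤ) - (k : ℤ) + δ : ℤ) : ℝ) = (δ : ℝ) := by push_cast; ring
    simp only [hwk, hbot, hcoefk]
    ring
  rw [hkey]
  -- final arithmetic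
  have hyoung : γ * (L_f * ‖x k - xt‖ * ‖xhat - x k‖)
      ≤ L_f / 2 * ‖x k - xt‖ ^ 2 + L_f / 2 * (γ ^ 2 * ‖xhat - x k‖ ^ 2) := by
    nlinarith [mul_nonneg hLf (sq_nonneg (‖x k - xt‖ - γ * ‖xhat - x k‖))]
  have hoptγ : γ * (⟪gradient f xt i0, xhat i0 - x k i0⟫ + g i0 (xhat i0) - g i0 (x k i0))
      ≤ γ * (-c * ‖xhat - x k‖ ^ 2) := mul_le_mul_of_nonneg_left hopt' hγ0.le
  have hdelL : L_f / 2 * ‖x k - xt‖ ^ 2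
      ≤ L_f / 2 * ((δ : ℝ) * ∑ l ∈ Finset.Ico ((k : ℤ) - δ) (k : ℤ),
          ‖x ((l + 1).toNat) - x (l.toNat)‖ ^ 2) :=
    mul_le_mul_of_nonneg_left hdel (by positivity)
  nlinarith [hfb, hgsplit, hoptγ, hyoung, hdelL]
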